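/- In G_m, the elements b_i := a'_i·a''_i (i = 0, …, m-1) pairwise commute and generate a free abelian subgroup of rank m. -/

import Mathlib

open FreeGroup

/-- Generators of the groups `G_m` and `G̃_m`: `.inl (i, false)` is `a'_i`,
`.inl (i, true)` is `a''_i`, and `.inr ()` is `a_m`. -/
abbrev Gen (m : ℕ) := (Fin m × Bool) ⊕ Unit

/-- The defining relators of the group `G_m`. -/
def Gm.rels (m : ℕ) : Set (FreeGroup (Gen m)) :=
  {w | (∃ i : Fin m, ∃ t : Bool, w = of (.inl (i, t)) * of (.inl (i, t)))
    ∨ w = of (.inr ()) * of (.inr ())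
    ∨ (∃ i j : Fin m, i < j ∧
        (w = of (.inl (i, false)) * of (.inl (j, false)) *
             (of (.inl (j, false)) * of (.inl (i, true)))⁻¹
       ∨ w = of (.inl (i, false)) * of (.inl (j, true)) *
             (of (.inl (j, true)) * of (.inl (i, true)))⁻¹))
    ∨ (∃ i : Fin m, w = of (.inl (i, false)) * of (.inr ()) *
             (of (.inr ()) * of (.inl (i, true)))⁻¹)}

/-- The group `G_m`. -/
abbrev Gm (m : ℕ) := PresentedGroup (Gm.rels m)

def Gm.a' {m : ℕ} (i : Fin m) : Gm m := PresentedGroup.of (.inl (i, false))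
def Gm.a'' {m : ℕ} (i : Fin m) : Gm m := PresentedGroup.of (.inl (i, true))
def Gm.am (m : ℕ) : Gm m := PresentedGroup.of (.inr ())

def negAut : Units ℤ →* MulAut (Multiplicative ℤ) where
  toFun u :=
    { toFun := fun x => x ^ (u : ℤ)
      invFun := fun x => x ^ (u : ℤ)
      left_inv := fun x => by
        show (x ^ (u : ℤ)) ^ (u : ℤ) = x
        rw [← zpow_mul, ← Units.val_mul, Int.units_mul_self, Units.val_one, zpow_one]
      right_inv := fun x => by
        show (x ^ (u : ℤ)) ^ (u : ℤ) = x
        rw [← zpow_mul, ← Units.val_mul, Int.units_mul_self, Units.val_one, zpow_one]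
      map_mul' := fun x y => mul_zpow x y _ }
  map_one' := by ext x; simp
  map_mul' u v := by
    ext x
    show x ^ ((u * v : Units ℤ) : ℤ) = (x ^ (v : ℤ)) ^ (u : ℤ)
    rw [← zpow_mul, Units.val_mul, mul_comm]

abbrev D := SemidirectProduct (Multiplicative ℤ) (Units ℤ) negAut
def dd (n : ℤ) (u : Units ℤ) : D := ⟨Multiplicative.ofAdd n, u⟩
lemma dd_eq {a b : ℤ} {u v : Units ℤ} (h1 : a = b) (h2 : u = v) : dd a u = dd b v := by
  rw [h1, h2]
lemma dd_mul (n p : ℤ) (u v : Units ℤ) :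
    dd n u * dd p v = dd (n + (u : ℤ) * p) (u * v) := by
  unfold dd; ext
  · show (Multiplicative.ofAdd n * (Multiplicative.ofAdd p) ^ (u : ℤ)).toAdd = n + (u : ℤ) * p
    rw [toAdd_mul, toAdd_zpow]; simp [zsmul_eq_mul]
  · rfl
lemma dd_one : dd 0 1 = 1 := rfl
lemma dd_left_inj {a b : ℤ} {u v : Units ℤ} (h : dd a u = dd b v) : a = b ∧ u = v := by
  unfold dd at h; injection h with h1 h2
  exact ⟨by simpa using congrArg Multiplicative.toAdd h1, h2⟩

def gmap (m : ℕ) : Gen m → (Fin m → D)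
  | .inl (i, t) => fun k =>
      dd (if k = i then (if t then -1 else 1) else 0) (if k ≤ i then -1 else 1)
  | .inr _ => fun k => dd 0 (-1)

lemma uval (c : Prop) [Decidable c] :
    Units.val (if c then (-1 : Units ℤ) else 1) = if c then (-1:ℤ) else 1 := by
  split_ifs <;> rfl



lemma rels_mapped (m : ℕ) : ∀ r ∈ Gm.rels m, FreeGroup.lift (gmap m) r = 1 := by
  rintro r (⟨i, t, rfl⟩ | rfl | ⟨i, j, hij, (rfl | rfl)⟩ | ⟨i, rfl⟩)
  · simp only [_root_.map_mul, FreeGroup.lift_apply_of]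
    funext k
    simp only [gmap, Pi.mul_apply, dd_mul, Pi.one_apply, ← dd_one]
    refine dd_eq ?_ (by split_ifs <;> decide)
    simp only [uval]
    rcases eq_or_ne k i with rfl | h
    · rw [if_pos rfl, if_pos (le_refl k)]; cases t <;> norm_num
    · simp [h]
  · simp only [_root_.map_mul, FreeGroup.lift_apply_of]
    funext k
    simp only [gmap, Pi.mul_apply, dd_mul, Pi.one_apply, ← dd_one]
    exact dd_eq (by norm_num) (by decide)
  · simp only [_root_.map_mul, _root_.map_inv, FreeGroup.lift_apply_of, mul_inv_eq_one]
    funext k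
    simp only [gmap, Pi.mul_apply, dd_mul]
    refine dd_eq ?_ (mul_comm _ _)
    simp only [uval]
    rcases eq_or_ne k i with rfl | hki
    · rw [if_pos rfl, if_pos (le_refl k), if_neg (ne_of_lt hij), if_pos (le_of_lt hij)]
      norm_num
    · rcases eq_or_ne k j with rfl | hkj
      · simp only [if_neg hki, if_pos rfl, if_neg (not_le.mpr hij), if_pos (le_refl k)]
        norm_num
      · simp [hki, hkj]
  · simp only [_root_.map_mul, _root_.map_inv, FreeGroup.lift_apply_of, mul_inv_eq_one]
    funext k
    simp only [gmap, Pi.mul_apply, dd_mul]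
    refine dd_eq ?_ (mul_comm _ _)
    simp only [uval]
    rcases eq_or_ne k i with rfl | hki
    · rw [if_pos rfl, if_pos (le_refl k), if_neg (ne_of_lt hij), if_pos (le_of_lt hij)]
      norm_num
    · rcases eq_or_ne k j with rfl | hkj
      · simp only [if_neg hki, if_pos rfl, if_neg (not_le.mpr hij), if_pos (le_refl k)]
        norm_num
      · simp [hki, hkj]
  · simp only [_root_.map_mul, _root_.map_inv, FreeGroup.lift_apply_of, mul_inv_eq_one]
    funext k
    simp only [gmap, Pi.mul_apply, dd_mul]
    refine dd_eq ?_ (mul_comm _ _)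
    simp only [uval]
    rcases eq_or_ne k i with rfl | hki
    · rw [if_pos rfl, if_pos (le_refl k)]; norm_num
    · simp [hki]

def fhom (m : ℕ) : Gm m →* (Fin m → D) := PresentedGroup.toGroup (rels_mapped m)

def bb {m : ℕ} (i : Fin m) : Gm m := Gm.a' i * Gm.a'' i

lemma rel_one {m : ℕ} {r : FreeGroup (Gen m)} (h : r ∈ Gm.rels m) :
    PresentedGroup.mk (Gm.rels m) r = 1 :=
  (QuotientGroup.eq_one_iff _).2 (Subgroup.subset_normalClosure h)

lemma sq' {m : ℕ} (i : Fin m) : Gm.a' i * Gm.a' i = 1 := by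
  have := rel_one (m := m) (Or.inl ⟨i, false, rfl⟩)
  simp only [_root_.map_mul] at this
  exact this

lemma sq'' {m : ℕ} (i : Fin m) : Gm.a'' i * Gm.a'' i = 1 := by
  have := rel_one (m := m) (Or.inl ⟨i, true, rfl⟩)
  simp only [_root_.map_mul] at this
  exact this

lemma rel1 {m : ℕ} {i j : Fin m} (hij : i < j) :
    Gm.a' i * Gm.a' j = Gm.a' j * Gm.a'' i := by
  have := rel_one (m := m) (Or.inr (Or.inr (Or.inl ⟨i, j, hij, Or.inl rfl⟩)))
  simp only [_root_.map_mul, _root_.map_inv] at this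
  rw [mul_inv_eq_one] at this
  exact this

lemma rel2 {m : ℕ} {i j : Fin m} (hij : i < j) :
    Gm.a' i * Gm.a'' j = Gm.a'' j * Gm.a'' i := by
  have := rel_one (m := m) (Or.inr (Or.inr (Or.inl ⟨i, j, hij, Or.inr rfl⟩)))
  simp only [_root_.map_mul, _root_.map_inv] at this
  rw [mul_inv_eq_one] at this
  exact this

lemma inv' {m : ℕ} (i : Fin m) : (Gm.a' i)⁻¹ = Gm.a' i :=
  inv_eq_of_mul_eq_one_right (sq' i)

lemma inv'' {m : ℕ} (i : Fin m) : (Gm.a'' i)⁻¹ = Gm.a'' i :=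
  inv_eq_of_mul_eq_one_right (sq'' i)

lemma comm_bb {m : ℕ} (i j : Fin m) : Commute (bb i) (bb j) := by
  have key : ∀ i j : Fin m, i < j → bb i * bb j = bb j * bb i := by
    intro i j hij
    have h1 := rel1 hij
    have h2 := rel2 hij
    have h1' : Gm.a'' i * Gm.a' j = Gm.a' j * Gm.a' i := by
      have := congrArg (·⁻¹) h1
      simpa [mul_inv_rev, inv', inv''] using this.symm
    have h2' : Gm.a'' j * Gm.a' i = Gm.a'' i * Gm.a'' j := by
      have := congrArg (·⁻¹) h2
      simpa [mul_inv_rev, inv', inv''] using this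
    have h1x : ∀ x, Gm.a'' i * (Gm.a' j * x) = Gm.a' j * (Gm.a' i * x) := fun x => by
      rw [← mul_assoc, h1', mul_assoc]
    have h2x : ∀ x, Gm.a' i * (Gm.a'' j * x) = Gm.a'' j * (Gm.a'' i * x) := fun x => by
      rw [← mul_assoc, h2, mul_assoc]
    have h2x' : ∀ x, Gm.a'' j * (Gm.a' i * x) = Gm.a'' i * (Gm.a'' j * x) := fun x => by
      rw [← mul_assoc, h2', mul_assoc]
    have h1x' : ∀ x, Gm.a' j * (Gm.a'' i * x) = Gm.a' i * (Gm.a' j * x) := fun x => by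
      rw [← mul_assoc, ← h1, mul_assoc]
    show Gm.a' i * Gm.a'' i * (Gm.a' j * Gm.a'' j) = Gm.a' j * Gm.a'' j * (Gm.a' i * Gm.a'' i)
    rw [mul_assoc, mul_assoc, h1x, h2, h2x', h1x']
  rcases lt_trichotomy i j with h | rfl | h
  · exact key i j h
  · rfl
  · exact (key j i h).symm

lemma fhom_bb {m : ℕ} (i : Fin m) :
    fhom m (bb i) = fun k => dd (if k = i then 2 else 0) 1 := by
  have h1 : fhom m (Gm.a' i) = gmap m (Sum.inl (i, false)) := PresentedGroup.toGroup.of _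
  have h2 : fhom m (Gm.a'' i) = gmap m (Sum.inl (i, true)) := PresentedGroup.toGroup.of _
  funext k
  rw [bb, _root_.map_mul, h1, h2]
  simp only [gmap, Pi.mul_apply, dd_mul]
  refine dd_eq ?_ (by split_ifs <;> decide)
  simp only [uval]
  rcases eq_or_ne k i with rfl | h
  · rw [if_pos rfl, if_pos (le_refl k)]; norm_num
  · simp [h]

lemma hcomm {m : ℕ} : Pairwise fun i j : Fin m => ∀ x y : Multiplicative ℤ,
    Commute (zpowersHom (Gm m) (bb i) x) (zpowersHom (Gm m) (bb j) y) := by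
  intro i j _ x y
  exact (comm_bb i j).zpow_zpow _ _

def Nhom (m : ℕ) : (Fin m → Multiplicative ℤ) →* Gm m :=
  MonoidHom.noncommPiCoprod (fun i => zpowersHom (Gm m) (bb i)) hcomm


lemma dd_zpow (n z : ℤ) : (dd n 1) ^ z = dd (z * n) 1 := by
  have h : dd n 1 = SemidirectProduct.inl (φ := negAut) (Multiplicative.ofAdd n) := rfl
  have h2 : (Multiplicative.ofAdd n) ^ z = Multiplicative.ofAdd (z * n) := by
    apply Multiplicative.toAdd.injective
    rw [toAdd_zpow]
    simp [zsmul_eq_mul, mul_comm]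
  rw [h, ← map_zpow, h2]
  rfl

def chi (m : ℕ) : (Fin m → Multiplicative ℤ) →* (Fin m → D) where
  toFun v := fun k => dd (2 * (v k).toAdd) 1
  map_one' := by
    funext k
    simp [← dd_one]
  map_mul' v w := by
    funext k
    simp only [Pi.mul_apply, dd_mul, toAdd_mul]
    exact dd_eq (by push_cast; ring) (by norm_num)

lemma comp_eq (m : ℕ) : (fhom m).comp (Nhom m) = chi m := by
  refine MonoidHom.pi_ext fun i x => ?_
  rw [MonoidHom.comp_apply]
  show fhom m (Nhom m (Pi.mulSingle i x)) = _
  rw [Nhom, MonoidHom.noncommPiCoprod_mulSingle, zpowersHom_apply, map_zpow, fhom_bb]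
  funext k
  rw [Pi.pow_apply]
  show (dd (if k = i then 2 else 0) 1) ^ x.toAdd
    = dd (2 * (Pi.mulSingle (M := fun _ => Multiplicative ℤ) i x k).toAdd) 1
  rw [dd_zpow]
  refine dd_eq ?_ rfl
  rcases eq_or_ne k i with rfl | h
  · rw [if_pos rfl, Pi.mulSingle_eq_same]; ring
  · rw [if_neg h, Pi.mulSingle_eq_of_ne h]; simp

lemma chi_inj (m : ℕ) : Function.Injective (chi m) := by
  intro v w h
  funext k
  have h1 : dd (2 * (v k).toAdd) 1 = dd (2 * (w k).toAdd) 1 := congrFun h k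
  have h2 := (dd_left_inj h1).1
  apply Multiplicative.toAdd.injective
  omega

lemma Nhom_inj (m : ℕ) : Function.Injective (Nhom m) := by
  intro v w h
  apply chi_inj m
  rw [← comp_eq, MonoidHom.comp_apply, MonoidHom.comp_apply, h]

lemma zpowersHom_range {m : ℕ} (i : Fin m) :
    (zpowersHom (Gm m) (bb i)).range = Subgroup.zpowers (bb i) := by
  ext x
  simp only [MonoidHom.mem_range, zpowersHom_apply, Subgroup.mem_zpowers_iff]
  constructor
  · rintro ⟨n, rfl⟩; exact ⟨n.toAdd, rfl⟩
  · rintro ⟨n, rfl⟩; exact ⟨Multiplicative.ofAdd n, rfl⟩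

lemma Nhom_range (m : ℕ) :
    (Nhom m).range = Subgroup.closure (Set.range fun i : Fin m => Gm.a' i * Gm.a'' i) := by
  rw [Nhom, MonoidHom.noncommPiCoprod_range]
  have : (Set.range fun i : Fin m => Gm.a' i * Gm.a'' i) = ⋃ i, {bb i} :=
    Set.range_eq_iUnion _
  rw [this, Subgroup.closure_iUnion]
  refine iSup_congr fun i => ?_
  rw [zpowersHom_range, Subgroup.zpowers_eq_closure]

/-- In `G_m`, the elements `b_i := a'_i · a''_i` pairwise commute and generate
a free abelian subgroup of rank `m`. -/
theorem stmt_16 (m : ℕ) :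
    (∀ i j : Fin m,
      Commute (Gm.a' i * Gm.a'' i) (Gm.a' j * Gm.a'' j)) ∧
    (∃ φ : Multiplicative (Fin m → ℤ) →* Gm m,
      Function.Injective φ ∧
      (∀ i : Fin m,
        φ (Multiplicative.ofAdd (Pi.single i 1)) = Gm.a' i * Gm.a'' i) ∧
      φ.range = Subgroup.closure (Set.range fun i : Fin m => Gm.a' i * Gm.a'' i)) := by
  refine ⟨fun i j => comm_bb i j, ?_⟩
  set E := MulEquiv.piMultiplicative (fun _ : Fin m => ℤ) with hE
  refine ⟨(Nhom m).comp E.toMonoidHom, ?_, ?_, ?_⟩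
  · exact (Nhom_inj m).comp E.injective
  · intro i
    have hsingle : E (Multiplicative.ofAdd (Pi.single i 1)) = Pi.mulSingle i (Multiplicative.ofAdd 1) := by
      funext k
      rcases eq_or_ne k i with rfl | h
      · simp [hE, MulEquiv.piMultiplicative]
      · simp [hE, MulEquiv.piMultiplicative, Pi.single_eq_of_ne h, Pi.mulSingle_eq_of_ne h]
    rw [MonoidHom.comp_apply, MulEquiv.coe_toMonoidHom, hsingle, Nhom,
      MonoidHom.noncommPiCoprod_mulSingle, zpowersHom_apply]
    show bb i ^ ((1:ℤ)) = Gm.a' i * Gm.a'' i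
    rw [zpow_one]; rfl
  · rw [← Nhom_range]
    ext x
    simp only [MonoidHom.mem_range]
    constructor
    · rintro ⟨y, rfl⟩; exact ⟨E y, rfl⟩
    · rintro ⟨y, rfl⟩
      exact ⟨E.symm y, by rw [MonoidHom.comp_apply, MulEquiv.coe_toMonoidHom, E.apply_symm_apply]⟩
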